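/- Let H be an (s,t-1)-linear hypergraph with m vertices, exactly n_i edges of size i for each i ∈ {s-1,...,m}, and no edges of size less than s-1. For any positive integers v and k with v < s ≤ k ≤ m, letting α be the integer with α ≡ (t-1)·binom(m-v,s-v) (mod binom(k-v,s-v)) and 0 ≤ α < binom(k-v,s-v), we have (1/(binom(k-v,s-v) - α))·Σ_{i=s-1}^{k-1} (binom(i-v,s-v) - α)·binom(i,v)·n_i + Σ_{i=k}^{m} binom(i,v)·n_i ≤ binom(m,v)·((t-1)·binom(m-v,s-v) - α)/binom(k-v,s-v). -/

import Mathlib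

open Finset

lemma card_filter_superset {β : Type*} [DecidableEq β] {v s : ℕ} (hvs : v ≤ s) (U V : Finset β)
    (hVU : V ⊆ U) (hV : V.card = v) :
    ((Finset.powersetCard s U).filter (fun S => V ⊆ S)).card
      = Nat.choose (U.card - v) (s - v) := by
  have h : ((Finset.powersetCard s U).filter (fun S => V ⊆ S)).card
      = (Finset.powersetCard (s - v) (U \ V)).card := by
    apply Finset.card_bij (fun S _ => S \ V)
    · intro S hS
      simp only [mem_filter, mem_powersetCard] at hS
      simp only [mem_powersetCard]
      refine ⟨sdiff_subset_sdiff hS.1.1 le_rfl, ?_⟩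
      rw [card_sdiff_of_subset hS.2, hS.1.2, hV]
    · intro S1 h1 S2 h2 h
      simp only [mem_filter, mem_powersetCard] at h1 h2
      have e1 : S1 = S1 \ V ∪ V := (sdiff_union_of_subset h1.2).symm
      have e2 : S2 = S2 \ V ∪ V := (sdiff_union_of_subset h2.2).symm
      rw [e1, e2, h]
    · intro W hW
      simp only [mem_powersetCard] at hW
      have hdisj : Disjoint W V := disjoint_of_subset_left hW.1 sdiff_disjoint
      refine ⟨W ∪ V, ?_, ?_⟩
      · simp only [mem_filter, mem_powersetCard]
        refine ⟨⟨union_subset (hW.1.trans sdiff_subset) hVU, ?_⟩, subset_union_right⟩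
        rw [card_union_of_disjoint hdisj, hW.2, hV]
        omega
      · rw [union_sdiff_distrib, sdiff_self]
        simp [sdiff_eq_self_of_disjoint hdisj]
  rw [h, Finset.card_powersetCard, card_sdiff_of_subset hVU, hV]

lemma edgeA {m v s : ℕ} (hvs : v < s) (V e : Finset (Fin m)) (hV : V.card = v)
    (hlow : s - 1 ≤ e.card) :
    ∑ i ∈ Icc (s-1) m, Nat.choose (i - v) (s - v) * (if e.card = i ∧ V ⊆ e then 1 else 0)
      = ∑ S ∈ (powersetCard s (univ : Finset (Fin m))).filter (fun S => V ⊆ S),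
          (if S ⊆ e then 1 else 0) := by
  have hem : e.card ≤ m := by
    simpa using Finset.card_le_univ e
  by_cases hVe : V ⊆ e
  · have hL : ∑ i ∈ Icc (s-1) m, Nat.choose (i - v) (s - v) * (if e.card = i ∧ V ⊆ e then 1 else 0)
        = Nat.choose (e.card - v) (s - v) := by
      rw [Finset.sum_eq_single e.card]
      · simp [hVe]
      · intro i hi hne
        have : ¬ (e.card = i) := fun h => hne h.symm
        simp [this]
      · intro h
        exact absurd (Finset.mem_Icc.mpr ⟨hlow, hem⟩) h
    rw [hL, Finset.sum_boole, Finset.filter_filter]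
    have hfe : (powersetCard s (univ : Finset (Fin m))).filter (fun S => V ⊆ S ∧ S ⊆ e)
        = (powersetCard s e).filter (fun S => V ⊆ S) := by
      ext S
      simp only [mem_filter, mem_powersetCard]
      constructor
      · rintro ⟨⟨-, h2⟩, h3, h4⟩; exact ⟨⟨h4, h2⟩, h3⟩
      · rintro ⟨⟨h1, h2⟩, h3⟩; exact ⟨⟨Finset.subset_univ S, h2⟩, h3, h1⟩
    rw [hfe, card_filter_superset (le_of_lt hvs) e V hVe hV]
    simp
  · rw [Finset.sum_eq_zero, Finset.sum_eq_zero]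
    · intro S hS
      simp only [mem_filter] at hS
      have : ¬ S ⊆ e := fun h => hVe (hS.2.trans h)
      simp [this]
    · intro i hi
      simp [hVe]

lemma multA {m v s : ℕ} (hvs : v < s) (V : Finset (Fin m)) (hV : V.card = v)
    (E : Multiset (Finset (Fin m))) (hsize : ∀ e ∈ E, s - 1 ≤ e.card) :
    ∑ i ∈ Icc (s-1) m, Nat.choose (i - v) (s - v) *
        Multiset.countP (fun e => e.card = i ∧ V ⊆ e) E
      = ∑ S ∈ (powersetCard s (univ : Finset (Fin m))).filter (fun S => V ⊆ S),
          Multiset.countP (fun e => S ⊆ e) E := by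
  induction E using Multiset.induction_on with
  | empty => simp
  | cons e E ih =>
    have he : s - 1 ≤ e.card := hsize e (Multiset.mem_cons_self e E)
    have hE : ∀ e' ∈ E, s - 1 ≤ e'.card := fun e' h => hsize e' (Multiset.mem_cons_of_mem h)
    simp only [Multiset.countP_cons, Nat.mul_add, Finset.sum_add_distrib, ih hE,
      edgeA hvs V e hV he]

lemma multB {m v : ℕ} (i : ℕ) (E : Multiset (Finset (Fin m))) :
    ∑ V ∈ powersetCard v (univ : Finset (Fin m)),
        Multiset.countP (fun e => e.card = i ∧ V ⊆ e) E
      = Nat.choose i v * Multiset.countP (fun e => e.card = i) E := by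
  induction E using Multiset.induction_on with
  | empty => simp
  | cons e E ih =>
    simp only [Multiset.countP_cons, Finset.sum_add_distrib, ih, Nat.mul_add]
    congr 1
    by_cases hc : e.card = i
    · subst hc
      have hfe : (powersetCard v (univ : Finset (Fin m))).filter (fun V => e.card = e.card ∧ V ⊆ e)
          = powersetCard v e := by
        ext V
        simp only [mem_filter, mem_powersetCard]
        have := Finset.subset_univ V
        tauto
      rw [Finset.sum_boole, hfe, card_powersetCard]
      simp
    · simp [hc]

lemma keyC (C α q N D A : ℤ) (hα0 : 0 ≤ α) (hαC : α < C)
    (hN : 0 ≤ N) (hD : 0 ≤ D) (hA : 0 ≤ A)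
    (hAN : A ≤ (C - 1) * N) (hbound : A + C * D ≤ C * q + α) :
    A - α * N + (C - α) * D ≤ (C - α) * q := by
  have hC : 0 < C := lt_of_le_of_lt hα0 hαC
  have hDq : D ≤ q := by nlinarith
  rcases le_or_gt N (q - D) with h | h
  · nlinarith [mul_le_mul_of_nonneg_left h (show (0:ℤ) ≤ C - 1 - α by omega)]
  · nlinarith [mul_le_mul_of_nonneg_left (show q - D + 1 ≤ N by omega) hα0]

theorem stmt_4 (m s t v k : ℕ) (hs : 2 ≤ s) (ht : 2 ≤ t)
    (hv : 1 ≤ v) (hvs : v < s) (hsk : s ≤ k) (hkm : k ≤ m)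
    (E : Multiset (Finset (Fin m)))
    (hsize : ∀ e ∈ E, s - 1 ≤ e.card)
    (hlin : ∀ S : Finset (Fin m), S.card = s →
      Multiset.countP (fun e => S ⊆ e) E ≤ t - 1)
    (nn : ℕ → ℕ)
    (hni : ∀ i, nn i = Multiset.countP (fun e => e.card = i) E)
    (α : ℕ) (hα : α < Nat.choose (k - v) (s - v))
    (hmod : α ≡ (t - 1) * Nat.choose (m - v) (s - v) [MOD Nat.choose (k - v) (s - v)]) :
    (1 / ((Nat.choose (k - v) (s - v) : ℝ) - α)) *
        ∑ i ∈ Finset.Icc (s - 1) (k - 1),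
          ((Nat.choose (i - v) (s - v) : ℝ) - α) * Nat.choose i v * nn i +
      ∑ i ∈ Finset.Icc k m, (Nat.choose i v : ℝ) * nn i ≤
    (Nat.choose m v : ℝ) *
      (((t - 1 : ℝ) * Nat.choose (m - v) (s - v) - α) / Nat.choose (k - v) (s - v)) := by
  classical
  set C := Nat.choose (k - v) (s - v) with hC
  set T := (t - 1) * Nat.choose (m - v) (s - v) with hT
  have hCpos : 0 < C := Nat.choose_pos (by omega)
  have hTmod : T % C = α := by
    have h1 : α % C = T % C := hmod
    rw [Nat.mod_eq_of_lt hα] at h1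
    exact h1.symm
  set q := T / C with hq
  have hTq : C * q + α = T := by rw [← hTmod, hq]; exact Nat.div_add_mod T C
  have haux : Nat.choose (k - 1 - v) (s - v) + 1 ≤ C := by
    have hp : 1 ≤ Nat.choose (k - 1 - v) (s - v - 1) := Nat.choose_pos (by omega)
    have hpascal : C = Nat.choose (k - 1 - v) (s - v - 1) + Nat.choose (k - 1 - v) (s - v) := by
      rw [hC]
      have e1 : k - v = (k - 1 - v) + 1 := by omega
      have e2 : s - v = (s - v - 1) + 1 := by omega
      rw [e1, e2, Nat.choose_succ_succ, Nat.succ_eq_add_one, ← e2]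
    omega
  set 𝒱 := powersetCard v (univ : Finset (Fin m)) with h𝒱
  set d : ℕ → Finset (Fin m) → ℕ :=
    fun i V => Multiset.countP (fun e => e.card = i ∧ V ⊆ e) E with hd
  -- Step A : for every v-set V the weighted degree sum is at most T
  have stepA : ∀ V ∈ 𝒱, ∑ i ∈ Icc (s-1) m, Nat.choose (i - v) (s - v) * d i V ≤ T := by
    intro V hV
    rw [h𝒱, mem_powersetCard] at hV
    rw [hd]
    rw [multA hvs V hV.2 E hsize]
    calc ∑ S ∈ (powersetCard s (univ : Finset (Fin m))).filter (fun S => V ⊆ S),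
            Multiset.countP (fun e => S ⊆ e) E
        ≤ ((powersetCard s (univ : Finset (Fin m))).filter (fun S => V ⊆ S)).card * (t - 1) := by
          rw [← smul_eq_mul]
          apply Finset.sum_le_card_nsmul
          intro S hS
          simp only [mem_filter, mem_powersetCard] at hS
          exact hlin S hS.1.2
      _ = T := by
          rw [card_filter_superset (le_of_lt hvs) _ V (Finset.subset_univ V) hV.2,
            card_univ, Fintype.card_fin, hT, Nat.mul_comm]
  -- splitting of the summation interval
  have hsplit : ∀ f : ℕ → ℕ,
      (∑ i ∈ Icc (s-1) (k-1), f i) + ∑ i ∈ Icc k m, f i = ∑ i ∈ Icc (s-1) m, f i := by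
    intro f
    have e1 : Icc (s-1) (k-1) = Ico (s-1) k := by
      rw [← Finset.Ico_add_one_right_eq_Icc]
      congr 1
      omega
    have e2 : Icc k m = Ico k (m+1) := by rw [Finset.Ico_add_one_right_eq_Icc]
    have e3 : Icc (s-1) m = Ico (s-1) (m+1) := by rw [Finset.Ico_add_one_right_eq_Icc]
    rw [e1, e2, e3]
    exact Finset.sum_Ico_consecutive f (by omega) (by omega)
  -- the per-V integer inequality
  have perV : ∀ V ∈ 𝒱,
      (∑ i ∈ Icc (s-1) (k-1), (Nat.choose (i-v) (s-v) : ℤ) * d i V)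
        - (α : ℤ) * (∑ i ∈ Icc (s-1) (k-1), (d i V : ℤ))
        + ((C:ℤ) - α) * (∑ i ∈ Icc k m, (d i V : ℤ))
      ≤ ((C:ℤ) - α) * q := by
    intro V hV
    apply keyC _ _ _ _ _ _ (by positivity) (by exact_mod_cast hα)
      (by positivity) (by positivity) (by positivity)
    · -- A ≤ (C-1) * N
      rw [Finset.mul_sum]
      apply Finset.sum_le_sum
      intro i hi
      have hile : i - v ≤ k - 1 - v := by
        rw [mem_Icc] at hi
        omega
      have h1 : Nat.choose (i-v) (s-v) ≤ C - 1 :=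
        le_trans (Nat.choose_le_choose (s-v) hile) (by omega)
      have h1' : (Nat.choose (i-v) (s-v) : ℤ) ≤ (C:ℤ) - 1 := by
        have : ((C:ℕ) : ℤ) - 1 = ((C - 1 : ℕ) : ℤ) := by
          have : 1 ≤ C := hCpos
          omega
        rw [this]
        exact_mod_cast h1
      exact mul_le_mul_of_nonneg_right h1' (by positivity)
    · -- A + C * D ≤ C * q + α
      have hb : (∑ i ∈ Icc (s-1) (k-1), Nat.choose (i-v) (s-v) * d i V)
          + C * (∑ i ∈ Icc k m, d i V) ≤ T := by
        have h2 : C * (∑ i ∈ Icc k m, d i V) ≤ ∑ i ∈ Icc k m, Nat.choose (i-v) (s-v) * d i V := by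
          rw [Finset.mul_sum]
          apply Finset.sum_le_sum
          intro i hi
          rw [mem_Icc] at hi
          exact Nat.mul_le_mul_right _ (Nat.choose_le_choose (s-v) (by omega))
        calc (∑ i ∈ Icc (s-1) (k-1), Nat.choose (i-v) (s-v) * d i V)
              + C * (∑ i ∈ Icc k m, d i V)
            ≤ (∑ i ∈ Icc (s-1) (k-1), Nat.choose (i-v) (s-v) * d i V)
              + ∑ i ∈ Icc k m, Nat.choose (i-v) (s-v) * d i V := by omega
          _ = ∑ i ∈ Icc (s-1) m, Nat.choose (i-v) (s-v) * d i V :=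
              hsplit (fun i => Nat.choose (i-v) (s-v) * d i V)
          _ ≤ T := stepA V hV
      have hTq' : ((C:ℤ) * q + α) = (T : ℤ) := by exact_mod_cast hTq
      rw [hTq']
      exact_mod_cast hb
  -- summing the per-V inequality over all v-subsets
  have hB : ∀ i, (∑ V ∈ 𝒱, (d i V : ℤ)) = (Nat.choose i v : ℤ) * nn i := by
    intro i
    have := multB (m := m) (v := v) i E
    rw [← hni i] at this
    exact_mod_cast this
  have hcard𝒱 : 𝒱.card = Nat.choose m v := by
    rw [h𝒱, card_powersetCard, card_univ, Fintype.card_fin]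
  have mainZ :
      (∑ i ∈ Icc (s-1) (k-1), ((Nat.choose (i-v) (s-v) : ℤ) - α) * (Nat.choose i v) * nn i)
        + ((C:ℤ) - α) * (∑ i ∈ Icc k m, (Nat.choose i v : ℤ) * nn i)
      ≤ (Nat.choose m v : ℤ) * (((C:ℤ) - α) * q) := by
    have hsum : ∑ V ∈ 𝒱,
        ((∑ i ∈ Icc (s-1) (k-1), (Nat.choose (i-v) (s-v) : ℤ) * d i V)
          - (α : ℤ) * (∑ i ∈ Icc (s-1) (k-1), (d i V : ℤ))
          + ((C:ℤ) - α) * (∑ i ∈ Icc k m, (d i V : ℤ)))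
        ≤ (Nat.choose m v : ℤ) * (((C:ℤ) - α) * q) := by
      calc _ ≤ 𝒱.card • (((C:ℤ) - α) * q) := Finset.sum_le_card_nsmul _ _ _ perV
        _ = (Nat.choose m v : ℤ) * (((C:ℤ) - α) * q) := by
            rw [hcard𝒱, nsmul_eq_mul]
    refine le_trans (le_of_eq ?_) hsum
    have h1 : ∑ V ∈ 𝒱, (∑ i ∈ Icc (s-1) (k-1), (Nat.choose (i-v) (s-v) : ℤ) * d i V)
        = ∑ i ∈ Icc (s-1) (k-1), (Nat.choose (i-v) (s-v) : ℤ) * ((Nat.choose i v : ℤ) * nn i) := by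
      rw [Finset.sum_comm]
      refine Finset.sum_congr rfl fun i _ => ?_
      rw [← Finset.mul_sum, hB i]
    have h2 : ∑ V ∈ 𝒱, (∑ i ∈ Icc (s-1) (k-1), (d i V : ℤ))
        = ∑ i ∈ Icc (s-1) (k-1), (Nat.choose i v : ℤ) * nn i := by
      rw [Finset.sum_comm]
      exact Finset.sum_congr rfl fun i _ => hB i
    have h3 : ∑ V ∈ 𝒱, (∑ i ∈ Icc k m, (d i V : ℤ))
        = ∑ i ∈ Icc k m, (Nat.choose i v : ℤ) * nn i := by
      rw [Finset.sum_comm]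
      exact Finset.sum_congr rfl fun i _ => hB i
    rw [Finset.sum_add_distrib, Finset.sum_sub_distrib, ← Finset.mul_sum, ← Finset.mul_sum,
      h1, h2, h3]
    congr 1
    rw [Finset.mul_sum, ← Finset.sum_sub_distrib]
    exact Finset.sum_congr rfl fun i _ => by ring
  -- pass to the reals
  have hposR : (0:ℝ) < (C:ℝ) - α := by
    have : (α : ℝ) < C := by exact_mod_cast hα
    linarith
  have hCne : (C:ℝ) ≠ 0 := by positivity
  have hrhs : ((t - 1 : ℝ) * Nat.choose (m - v) (s - v) - α) / (C : ℝ) = (q : ℝ) := by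
    have hTR : (t - 1 : ℝ) * Nat.choose (m - v) (s - v) = (C : ℝ) * q + α := by
      have h2 : ((C * q + α : ℕ) : ℝ) = ((T : ℕ) : ℝ) := by rw [hTq]
      push_cast [hT, Nat.cast_sub (show 1 ≤ t by omega)] at h2
      linarith
    rw [hTR]
    field_simp
    ring
  rw [hrhs]
  have hmainR :
      (∑ i ∈ Finset.Icc (s - 1) (k - 1),
          ((Nat.choose (i - v) (s - v) : ℝ) - α) * Nat.choose i v * nn i)
        + ((C:ℝ) - α) * (∑ i ∈ Finset.Icc k m, (Nat.choose i v : ℝ) * nn i)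
      ≤ (Nat.choose m v : ℝ) * (((C:ℝ) - α) * q) := by
    exact_mod_cast mainZ
  set S1 : ℝ := ∑ i ∈ Finset.Icc (s - 1) (k - 1),
      ((Nat.choose (i - v) (s - v) : ℝ) - α) * Nat.choose i v * nn i with hS1
  set S2 : ℝ := ∑ i ∈ Finset.Icc k m, (Nat.choose i v : ℝ) * nn i with hS2
  have hform : 1 / ((C:ℝ) - α) * S1 + S2 = (S1 + ((C:ℝ) - α) * S2) / ((C:ℝ) - α) := by
    field_simp
  rw [hform, div_le_iff₀ hposR]
  nlinarith [hmainR]
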